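/- The explicit gauge solves its Cauchy problem: Let λ ∈ ℂ∖{0} and A₀(λ) = [[0, λ⁻¹/2], [λ/2, 0]] (the Delaunay residue at t = 0 in the case r = 1/2, s = 0). Let p ∈ ℂ, q ∈ ℂ∖{0}, and let h(z) = z/(pz + q). On the disk {z ∈ ℂ : |p z| < |q|} define G(z,λ) = [[ (1 + pz/q)^{−1/2}, 0 ], [ λ·p·z·q⁻¹·(1 + pz/q)^{−1/2}, (1 + pz/q)^{1/2} ]], using the principal branch of the square root (well defined since |pz/q| < 1). Then G is holomorphic in z on this disk, G(0,λ) = I, det G(z,λ) = 1, and for every z ≠ 0 in the disk, ∂G/∂z(z,λ) = G(z,λ)·A₀(λ)·z⁻¹ − A₀(λ)·G(z,λ)·(h'(z)/h(z)), where h'(z)/h(z) = q/(z·(pz+q)). -/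

import Mathlib

open Matrix Complex

attribute [local instance] Matrix.normedAddCommGroup Matrix.normedSpace

/-- The Delaunay residue at `t = 0` in the spherical case `r = 1/2`, `s = 0`. -/
noncomputable def A0 (lam : ℂ) : Matrix (Fin 2) (Fin 2) ℂ :=
  !![0, lam⁻¹ / 2; lam / 2, 0]

/-- The explicit gauge. -/
noncomputable def dpwGauge (p q : ℂ) (lam z : ℂ) : Matrix (Fin 2) (Fin 2) ℂ :=
  !![(1 + p * z / q) ^ (-(1 : ℂ) / 2), 0;
     lam * p * z * q⁻¹ * (1 + p * z / q) ^ (-(1 : ℂ) / 2),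
     (1 + p * z / q) ^ ((1 : ℂ) / 2)]

lemma re_pos_aux (p q z : ℂ) (hq : q ≠ 0) (h : ‖p*z‖ < ‖q‖) :
    0 < (1 + p * z / q).re := by
  have h1 : ‖p*z/q‖ < 1 := by
    rw [norm_div, div_lt_one (norm_pos_iff.mpr hq)]; exact h
  have h2 := abs_lt.mp (lt_of_le_of_lt (Complex.abs_re_le_norm (p*z/q)) h1)
  simp only [Complex.add_re, Complex.one_re]; linarith [h2.1]

lemma gauge_hasDerivAt (lam p q z : ℂ) (hq : q ≠ 0)
    (h : ‖p*z‖ < ‖q‖) :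
    HasDerivAt (dpwGauge p q lam)
      !![-(1:ℂ)/2 * (1 + p*z/q) ^ (-(1:ℂ)/2 - 1) * (p/q), 0;
         lam*p*q⁻¹ * (1 + p*z/q) ^ (-(1:ℂ)/2)
           + lam*p*z*q⁻¹ * (-(1:ℂ)/2 * (1 + p*z/q) ^ (-(1:ℂ)/2 - 1) * (p/q)),
         (1:ℂ)/2 * (1 + p*z/q) ^ ((1:ℂ)/2 - 1) * (p/q)] z := by
  have hre := re_pos_aux p q z hq h
  have hw' : HasDerivAt (fun z : ℂ => 1 + p*z/q) (p/q) z := by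
    simpa using (((hasDerivAt_id z).const_mul p).div_const q).const_add 1
  have hf : HasDerivAt (fun z : ℂ => (1 + p*z/q) ^ (-(1:ℂ)/2))
      (-(1:ℂ)/2 * (1 + p*z/q) ^ (-(1:ℂ)/2 - 1) * (p/q)) z :=
    hw'.cpow_const (Or.inl hre)
  have hg : HasDerivAt (fun z : ℂ => (1 + p*z/q) ^ ((1:ℂ)/2))
      ((1:ℂ)/2 * (1 + p*z/q) ^ ((1:ℂ)/2 - 1) * (p/q)) z :=
    hw'.cpow_const (Or.inl hre)
  have hc : HasDerivAt (fun z : ℂ => lam*p*z*q⁻¹) (lam*p*q⁻¹) z := by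
    simpa using ((hasDerivAt_id z).const_mul (lam*p)).mul_const q⁻¹
  have h21 : HasDerivAt (fun z : ℂ => lam*p*z*q⁻¹ * (1 + p*z/q) ^ (-(1:ℂ)/2))
      (lam*p*q⁻¹ * (1 + p*z/q) ^ (-(1:ℂ)/2)
        + lam*p*z*q⁻¹ * (-(1:ℂ)/2 * (1 + p*z/q) ^ (-(1:ℂ)/2 - 1) * (p/q))) z :=
    hc.mul hf
  refine hasDerivAt_pi.2 fun i => hasDerivAt_pi.2 fun j => ?_
  fin_cases i <;> fin_cases j <;>
    simp only [dpwGauge, Matrix.cons_val', Matrix.cons_val_zero, Matrix.cons_val_one,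
      Matrix.head_cons, Matrix.head_fin_const, Matrix.of_apply, Matrix.empty_val',
      Matrix.cons_val_fin_one, Fin.isValue, Fin.zero_eta, Fin.mk_one]
  · exact hf
  · exact hasDerivAt_const z 0
  · exact h21
  · exact hg

set_option maxHeartbeats 1600000 in
/-- The explicit gauge solves its Cauchy problem
`dG = G·A₀·z⁻¹dz − A₀·G·(dh/h)`, `G(0) = I`, where `h(z) = z/(pz+q)`. -/
theorem explicit_gauge_cauchy_problem
    (lam : ℂ) (hlam : lam ≠ 0) (p q : ℂ) (hq : q ≠ 0) :
    DifferentiableOn ℂ (dpwGauge p q lam)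
      {z : ℂ | ‖p * z‖ < ‖q‖} ∧
    dpwGauge p q lam 0 = 1 ∧
    (∀ z ∈ {z : ℂ | ‖p * z‖ < ‖q‖},
      (dpwGauge p q lam z).det = 1) ∧
    (∀ z ∈ {z : ℂ | ‖p * z‖ < ‖q‖}, z ≠ 0 →
      HasDerivAt (dpwGauge p q lam)
        (z⁻¹ • (dpwGauge p q lam z * A0 lam) -
          (q / (z * (p * z + q))) • (A0 lam * dpwGauge p q lam z)) z) := by
  refine ⟨fun z hz => (gauge_hasDerivAt lam p q z hq hz).differentiableAt.differentiableWithinAt,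
    ?_, ?_, ?_⟩
  · simp [dpwGauge, Matrix.one_fin_two]
  · intro z hz
    have hre := re_pos_aux p q z hq hz
    have hw0 : (1 + p*z/q) ≠ 0 := by
      intro h0; rw [h0] at hre; simp at hre
    simp only [dpwGauge, Matrix.det_fin_two_of, mul_zero, sub_zero, zero_mul]
    rw [← Complex.cpow_add _ _ hw0]
    norm_num
  · intro z hz hz0
    have hre := re_pos_aux p q z hq hz
    have hw0 : (1 + p*z/q) ≠ 0 := by
      intro h0; rw [h0] at hre; simp at hre
    have hpzq : p*z + q ≠ 0 := by
      have : p*z + q = q * (1 + p*z/q) := by field_simp; ring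
      rw [this]; exact mul_ne_zero hq hw0
    have key1 : (1 + p*z/q) ^ ((1:ℂ)/2) = (1 + p*z/q) ^ (-(1:ℂ)/2) * (1 + p*z/q) := by
      rw [show ((1:ℂ)/2) = -(1:ℂ)/2 + 1 by ring, Complex.cpow_add _ _ hw0, Complex.cpow_one]
    have key2 : (1 + p*z/q) ^ (-(1:ℂ)/2 - 1)
        = (1 + p*z/q) ^ (-(1:ℂ)/2) * (1 + p*z/q)⁻¹ := by
      rw [show (-(1:ℂ)/2 - 1) = -(1:ℂ)/2 + (-1) by ring, Complex.cpow_add _ _ hw0,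
        Complex.cpow_neg_one]
    have key3 : (1 + p*z/q) ^ ((1:ℂ)/2 - 1) = (1 + p*z/q) ^ (-(1:ℂ)/2) := by
      norm_num
    have hqz : q + p*z ≠ 0 := by rwa [add_comm] at hpzq
    have hwv : 1 + p*z/q = (q + p*z)/q := by field_simp
    have heq : (!![-(1:ℂ)/2 * (1 + p*z/q) ^ (-(1:ℂ)/2 - 1) * (p/q), 0;
         lam*p*q⁻¹ * (1 + p*z/q) ^ (-(1:ℂ)/2)
           + lam*p*z*q⁻¹ * (-(1:ℂ)/2 * (1 + p*z/q) ^ (-(1:ℂ)/2 - 1) * (p/q)),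
         (1:ℂ)/2 * (1 + p*z/q) ^ ((1:ℂ)/2 - 1) * (p/q)] : Matrix (Fin 2) (Fin 2) ℂ)
        = z⁻¹ • (dpwGauge p q lam z * A0 lam) -
          (q / (z * (p * z + q))) • (A0 lam * dpwGauge p q lam z) := by
      ext i j
      fin_cases i <;> fin_cases j <;>
        simp only [dpwGauge, A0, Matrix.cons_val', Matrix.cons_val_zero, Matrix.cons_val_one,
          Matrix.head_cons, Matrix.head_fin_const, Matrix.of_apply, Matrix.empty_val',
          Matrix.cons_val_fin_one, Fin.isValue, Fin.zero_eta, Fin.mk_one,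
          Matrix.sub_apply, Matrix.smul_apply, smul_eq_mul, Matrix.mul_apply,
          Fin.sum_univ_two, key1, key2, key3] <;>
        rw [hwv]
      · field_simp [hz0, hq, hlam, hqz, hpzq]; ring
      · field_simp [hz0, hq, hlam, hqz, hpzq]
        have hzp : z * p + q ≠ 0 := by rwa [mul_comm]
        field_simp [hzp]; ring
      · have hden : p * q ^ 3 * z * 2 + q ^ 4 * 2 ≠ 0 := by
          have e : p * q ^ 3 * z * 2 + q ^ 4 * 2 = 2 * q^3 * (p*z + q) := by ring
          rw [e]; exact mul_ne_zero (mul_ne_zero two_ne_zero (pow_ne_zero _ hq)) hpzq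
        field_simp [hz0, hq, hlam, hqz, hpzq]
        ring
      · field_simp [hz0, hq, hlam, hqz, hpzq]; ring
    exact heq ▸ gauge_hasDerivAt lam p q z hq hz
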